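/- Let A = (a_{ij}) ∈ ℝ^{ℓ×n} and suppose that for every v ∈ ℝ^ℓ the quadratic function z ↦ Σ_{i,j} v_i a_{ij} |z_j|² on ℂⁿ is either identically zero or attains both strictly positive and strictly negative values. Then A(ℝ₊ⁿ) = im(A), i.e., the image of the map J: ℂⁿ → ℝ^ℓ, J_i(z) = Σ_j a_{ij}|z_j|², is a vector subspace of ℝ^ℓ of dimension rank(A). -/

import Mathlib

open scoped InnerProductSpace

/-- The cone generated by finitely many vectors is closed. -/
lemma isClosed_finitely_generated_cone {E : Type*} [NormedAddCommGroup E] [NormedSpace ℝ E]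
    [FiniteDimensional ℝ E] :
    ∀ (m : ℕ) (v : Fin m → E),
      IsClosed {x : E | ∃ t : Fin m → ℝ, (∀ j, 0 ≤ t j) ∧ x = ∑ j, t j • v j} := by
  intro m
  induction m with
  | zero =>
    intro v
    have : {x : E | ∃ t : Fin 0 → ℝ, (∀ j, 0 ≤ t j) ∧ x = ∑ j, t j • v j} = {0} := by
      ext x
      simp [Fin.isEmpty]
    rw [this]
    exact isClosed_singleton
  | succ m ih =>
    intro v
    by_cases hli : LinearIndependent ℝ v
    · -- linearly independent generators: the cone is the image of the closed set
      -- `{t | 0 ≤ t}` under a closed embedding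
      let f : (Fin (m + 1) → ℝ) →ₗ[ℝ] E :=
        { toFun := fun t => ∑ j, t j • v j
          map_add' := by
            intro a b
            simp [add_smul, Finset.sum_add_distrib]
          map_smul' := by
            intro c a
            simp [smul_smul, Finset.smul_sum] }
      have hker : LinearMap.ker f = ⊥ := by
        rw [LinearMap.ker_eq_bot']
        intro t ht
        have := (Fintype.linearIndependent_iff.mp hli) t ht
        funext j
        exact this j
      have hemb := LinearMap.isClosedEmbedding_of_injective (f := f) hker
      have hclosed : IsClosed {t : Fin (m + 1) → ℝ | ∀ j, 0 ≤ t j} := by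
        have : {t : Fin (m + 1) → ℝ | ∀ j, 0 ≤ t j}
            = ⋂ j, (fun t : Fin (m + 1) → ℝ => t j) ⁻¹' Set.Ici 0 := by
          ext t; simp [Set.mem_iInter]
        rw [this]
        exact isClosed_iInter fun j => (isClosed_Ici).preimage (continuous_apply j)
      have himg : {x : E | ∃ t : Fin (m + 1) → ℝ, (∀ j, 0 ≤ t j) ∧ x = ∑ j, t j • v j}
          = f '' {t : Fin (m + 1) → ℝ | ∀ j, 0 ≤ t j} := by
        ext x
        simp only [Set.mem_image, Set.mem_setOf_eq]
        constructor
        · rintro ⟨t, ht, rfl⟩; exact ⟨t, ht, rfl⟩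
        · rintro ⟨t, ht, rfl⟩; exact ⟨t, ht, rfl⟩
      rw [himg]
      exact hemb.isClosedMap _ hclosed
    · -- linearly dependent: the cone is a finite union of cones with fewer generators
      have hdep : ∃ c : Fin (m + 1) → ℝ, (∑ j, c j • v j = 0) ∧ ∃ j, 0 < c j := by
        rw [Fintype.linearIndependent_iff] at hli
        push_neg at hli
        obtain ⟨g, hg, i, hi⟩ := hli
        rcases lt_or_gt_of_ne hi with hneg | hpos
        · refine ⟨-g, ?_, i, by simpa using hneg⟩
          simp only [Pi.neg_apply, neg_smul, Finset.sum_neg_distrib, hg, neg_zero]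
        · exact ⟨g, hg, i, hpos⟩
      obtain ⟨c, hcsum, j1, hj1⟩ := hdep
      have key : {x : E | ∃ t : Fin (m + 1) → ℝ, (∀ j, 0 ≤ t j) ∧ x = ∑ j, t j • v j}
          = ⋃ k : Fin (m + 1),
            {x : E | ∃ t : Fin m → ℝ, (∀ j, 0 ≤ t j) ∧ x = ∑ j, t j • v (k.succAbove j)} := by
        ext x
        simp only [Set.mem_iUnion, Set.mem_setOf_eq]
        constructor
        · rintro ⟨t, ht, rfl⟩
          -- minimize `t j / c j` over indices with `c j > 0`
          have hne : (Finset.univ.filter (fun j => 0 < c j)).Nonempty :=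
            ⟨j1, by simp [hj1]⟩
          obtain ⟨j0, hj0mem, hj0min⟩ :=
            Finset.exists_min_image (Finset.univ.filter (fun j => 0 < c j))
              (fun j => t j / c j) hne
          have hcj0 : 0 < c j0 := by simpa using (Finset.mem_filter.mp hj0mem).2
          set lam : ℝ := t j0 / c j0 with hlam
          have hlamnn : 0 ≤ lam := div_nonneg (ht j0) hcj0.le
          set t' : Fin (m + 1) → ℝ := fun j => t j - lam * c j with ht'
          have ht'nn : ∀ j, 0 ≤ t' j := by
            intro j
            by_cases hcj : 0 < c j
            · have hmin : lam ≤ t j / c j := hj0min j (by simp [hcj])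
              have hle : lam * c j ≤ t j := by
                rw [← le_div_iff₀ hcj]
                exact hmin
              simp only [ht']
              linarith
            · push_neg at hcj
              have : 0 ≤ -(lam * c j) := by
                rw [neg_nonneg]
                exact mul_nonpos_of_nonneg_of_nonpos hlamnn hcj
              have := ht j
              simp only [ht']
              linarith
          have ht'j0 : t' j0 = 0 := by
            simp only [ht', hlam]
            field_simp
            ring
          have hsum' : ∑ j, t' j • v j = ∑ j, t j • v j := by
            simp only [ht', sub_smul, Finset.sum_sub_distrib, mul_smul]
            rw [← Finset.smul_sum, hcsum, smul_zero, sub_zero]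
          refine ⟨j0, fun j => t' (j0.succAbove j), fun j => ht'nn _, ?_⟩
          rw [← hsum', Fin.sum_univ_succAbove (fun j => t' j • v j) j0, ht'j0, zero_smul,
            zero_add]
        · rintro ⟨k, t, ht, rfl⟩
          refine ⟨@Fin.insertNth m (fun _ => ℝ) k 0 t, ?_, ?_⟩
          · intro j
            rcases eq_or_ne j k with rfl | hjk
            · simp
            · obtain ⟨j', rfl⟩ := Fin.exists_succAbove_eq hjk
              simpa using ht j'
          · have hsplit :=
              Fin.sum_univ_succAbove (fun j : Fin (m + 1) => (@Fin.insertNth m (fun _ => ℝ) k 0 t) j • v j) k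
            simp only [Fin.insertNth_apply_same, zero_smul, zero_add,
              Fin.insertNth_apply_succAbove] at hsplit
            exact hsplit.symm
      rw [key]
      exact isClosed_iUnion_of_finite fun k => ih _

/-- If for every v ∈ ℝ^ℓ the function z ↦ Σ_{i,j} v_i a_{ij} |z_j|² on ℂⁿ is
identically zero or attains both strictly positive and strictly negative values, then the
image of J, J_i(z) = Σ_j a_{ij}|z_j|², is the vector subspace im(A), of dimension rank(A). -/
theorem range_momentMap_eq_range_of_sign_change {ℓ n : ℕ} (A : Matrix (Fin ℓ) (Fin n) ℝ)
    (h : ∀ v : Fin ℓ → ℝ,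
      (∀ z : Fin n → ℂ, ∑ i, ∑ j, v i * A i j * Complex.normSq (z j) = 0) ∨
      ((∃ z : Fin n → ℂ, 0 < ∑ i, ∑ j, v i * A i j * Complex.normSq (z j)) ∧
       (∃ z : Fin n → ℂ, ∑ i, ∑ j, v i * A i j * Complex.normSq (z j) < 0))) :
    Set.range (fun z : Fin n → ℂ => fun i => ∑ j, A i j * Complex.normSq (z j)) =
      Set.range A.mulVec ∧
    Module.finrank ℝ (LinearMap.range A.mulVecLin) = A.rank := by
  classical
  refine ⟨?_, rfl⟩
  -- the columns of `A`
  set col : Fin n → (Fin ℓ → ℝ) := fun j i => A i j with hcol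
  -- the cone generated by the columns
  set S : Set (Fin ℓ → ℝ) :=
    {x | ∃ t : Fin n → ℝ, (∀ j, 0 ≤ t j) ∧ x = ∑ j, t j • col j} with hS
  -- the cone is closed (viewing `Fin ℓ → ℝ` as a Euclidean space)
  have hSclosed : IsClosed (WithLp.ofLp ⁻¹' S : Set (EuclideanSpace ℝ (Fin ℓ))) :=
    (isClosed_finitely_generated_cone n col).preimage (PiLp.continuous_ofLp 2 _)
  -- the cone as a `ConvexCone` in Euclidean space
  let K : ConvexCone ℝ (EuclideanSpace ℝ (Fin ℓ)) :=
  { carrier := WithLp.ofLp ⁻¹' S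
    smul_mem' := by
      rintro a ha x ⟨t, ht, hx⟩
      refine ⟨a • t, fun j => mul_nonneg ha.le (ht j), ?_⟩
      rw [WithLp.ofLp_smul, hx, Finset.smul_sum]
      exact Finset.sum_congr rfl fun j _ => by
        rw [Pi.smul_apply, smul_eq_mul, smul_smul]
    add_mem' := by
      rintro x ⟨t, ht, hx⟩ y ⟨s, hs, hy⟩
      refine ⟨t + s, fun j => add_nonneg (ht j) (hs j), ?_⟩
      rw [WithLp.ofLp_add, hx, hy, ← Finset.sum_add_distrib]
      exact Finset.sum_congr rfl fun j _ => (add_smul (t j) (s j) (col j)).symm }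
  have hKne : (K : Set (EuclideanSpace ℝ (Fin ℓ))).Nonempty :=
    ⟨0, ⟨0, fun j => le_refl 0, by simp⟩⟩
  -- real inner product on Euclidean space
  have hinner : ∀ x y : EuclideanSpace ℝ (Fin ℓ), ⟪x, y⟫_ℝ = ∑ i, x i * y i := by
    intro x y
    simp [PiLp.inner_apply, RCLike.inner_apply, conj_trivial, mul_comm]
  -- every value of `J` lies in the cone
  have hJmem : ∀ z : Fin n → ℂ,
      (fun i => ∑ j, A i j * Complex.normSq (z j)) ∈ S := by
    intro z
    refine ⟨fun j => Complex.normSq (z j), fun j => Complex.normSq_nonneg _, ?_⟩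
    funext i
    rw [Finset.sum_apply]
    exact Finset.sum_congr rfl fun j _ => by
      simp [hcol, Pi.smul_apply, smul_eq_mul, mul_comm]
  -- key separation argument: every element in the span of the columns lies in the cone
  have hmain : ∀ cvec : Fin n → ℝ, A.mulVec cvec ∈ S := by
    intro cvec
    by_contra hb
    obtain ⟨y, hy1, hy2⟩ :=
      ProperCone.hyperplane_separation'
        ⟨K.toPointedCone (ConvexCone.Pointed.of_nonempty_of_isClosed hKne hSclosed), hSclosed⟩
        (x₀ := WithLp.toLp 2 (A.mulVec cvec)) hb
    -- for every z, the quadratic form value is `⟪J z, y⟫ ≥ 0`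
    have hpos : ∀ z : Fin n → ℂ,
        0 ≤ ∑ i, ∑ j, y i * A i j * Complex.normSq (z j) := by
      intro z
      have h0 := hy1 (WithLp.toLp 2 (fun i => ∑ j, A i j * Complex.normSq (z j))) (hJmem z)
      rw [hinner] at h0
      calc (0:ℝ) ≤ ∑ i, (∑ j, A i j * Complex.normSq (z j)) * y i := h0
        _ = ∑ i, ∑ j, y i * A i j * Complex.normSq (z j) := by
            refine Finset.sum_congr rfl fun i _ => ?_
            rw [Finset.sum_mul]
            exact Finset.sum_congr rfl fun j _ => by ring
    -- hence by the hypothesis the form is identically zero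
    have hzero : ∀ z : Fin n → ℂ, ∑ i, ∑ j, y i * A i j * Complex.normSq (z j) = 0 := by
      rcases h y with h1 | ⟨_, ⟨z, hzneg⟩⟩
      · exact h1
      · exact absurd (hpos z) (not_le.mpr hzneg)
    -- so `y` is orthogonal to every column
    have hcol0 : ∀ j0 : Fin n, ∑ i, y i * A i j0 = 0 := by
      intro j0
      have := hzero (fun j => if j = j0 then 1 else 0)
      have heq : ∀ i : Fin ℓ, ∑ j, y i * A i j *
          Complex.normSq (if j = j0 then 1 else 0) = y i * A i j0 := by
        intro i
        rw [Finset.sum_eq_single j0]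
        · simp
        · intro j _ hj
          simp [hj]
        · simp
      rw [Finset.sum_congr rfl fun i _ => heq i] at this
      exact this
    -- therefore `⟪y, A.mulVec cvec⟫ = 0`, contradicting the separation
    have : ⟪y, WithLp.toLp 2 (A.mulVec cvec)⟫_ℝ = 0 := by
      rw [hinner, WithLp.ofLp_toLp]
      have : ∀ i, y i * (A.mulVec cvec) i = ∑ j, cvec j * (y i * A i j) := by
        intro i
        rw [Matrix.mulVec, dotProduct, Finset.mul_sum]
        exact Finset.sum_congr rfl fun j _ => by ring
      rw [Finset.sum_congr rfl fun i _ => this i, Finset.sum_comm]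
      rw [Finset.sum_eq_zero]
      intro j _
      rw [← Finset.mul_sum, hcol0 j, mul_zero]
    rw [real_inner_comm, this] at hy2
    exact lt_irrefl 0 hy2
  -- range of `mulVec` equals the cone
  have hrange2 : Set.range A.mulVec = S := by
    apply Set.eq_of_subset_of_subset
    · rintro x ⟨cvec, rfl⟩
      exact hmain cvec
    · rintro x ⟨t, ht, rfl⟩
      refine ⟨t, ?_⟩
      funext i
      rw [Matrix.mulVec, dotProduct, Finset.sum_apply]
      exact Finset.sum_congr rfl fun j _ => by
        simp [hcol, Pi.smul_apply, smul_eq_mul, mul_comm]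
  -- range of `J` equals the cone
  have hrange1 : Set.range (fun z : Fin n → ℂ => fun i => ∑ j, A i j * Complex.normSq (z j))
      = S := by
    apply Set.eq_of_subset_of_subset
    · rintro x ⟨z, rfl⟩
      exact hJmem z
    · rintro x ⟨t, ht, rfl⟩
      refine ⟨fun j => (Real.sqrt (t j) : ℂ), ?_⟩
      funext i
      rw [Finset.sum_apply]
      refine Finset.sum_congr rfl fun j _ => ?_
      rw [Complex.normSq_ofReal, Real.mul_self_sqrt (ht j)]
      simp [hcol, Pi.smul_apply, smul_eq_mul, mul_comm]
  rw [hrange1, hrange2]
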